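/- Interpolation lemma: Let n_0 ∈ ℕ, p ≥ 1, and let U ⊂ ℝ^N be a bounded domain with smooth boundary. Suppose {φ_ε}_{ε>0} ⊂ W^{n_0,p}(U, ℝ^m) satisfies: ε^{n_0} ∇^{n_0} φ_ε → 0 in L^p(U) as ε→0⁺, and there is a constant C̄ > 0 with ∫_U |φ_ε|^p dx ≤ C̄ for all ε. Then for every j ∈ {1,...,n_0}, ε^j ∇^j φ_ε → 0 in L^p(U) as ε→0⁺. -/

import Mathlib

open MeasureTheory Filter Set
open scoped ENNReal

theorem aux_rpow (m j : ℕ) (hj2 : j < m + 1) (s ε C₀ : ℝ) (hs : 0 < s) (hε : 0 < ε) :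
    ε ^ j * (C₀ * (s * ε ^ (m + 1 - j)) ^ (-(j : ℝ) / ((m : ℝ) + 1 - (j : ℝ)))) =
      C₀ * s ^ (-(j : ℝ) / ((m : ℝ) + 1 - (j : ℝ))) := by
  set γ : ℝ := -(j : ℝ) / ((m : ℝ) + 1 - (j : ℝ)) with hγ
  have hjle : (j : ℝ) < (m : ℝ) + 1 := by exact_mod_cast hj2
  have hd : ((m : ℝ) + 1 - (j : ℝ)) ≠ 0 := by linarith
  have h1 : ((m + 1 - j : ℕ) : ℝ) = (m : ℝ) + 1 - (j : ℝ) := by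
    rw [Nat.cast_sub hj2.le]; push_cast; ring
  have h2 : (s * ε ^ (m + 1 - j)) ^ γ = s ^ γ * ((ε ^ (m + 1 - j) : ℝ)) ^ γ :=
    Real.mul_rpow hs.le (by positivity)
  have h3 : ((ε ^ (m + 1 - j) : ℝ)) ^ γ = ε ^ (-(j : ℝ)) := by
    rw [← Real.rpow_natCast ε (m + 1 - j), ← Real.rpow_mul hε.le]
    congr 1
    rw [h1, hγ]
    field_simp
  have h4 : ε ^ j * ε ^ (-(j : ℝ)) = 1 := by
    rw [← Real.rpow_natCast ε j, ← Real.rpow_add hε]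
    simp
  calc ε ^ j * (C₀ * (s * ε ^ (m + 1 - j)) ^ γ)
      = C₀ * s ^ γ * (ε ^ j * ε ^ (-(j : ℝ))) := by rw [h2, h3]; ring
    _ = C₀ * s ^ γ := by rw [h4, mul_one]

theorem aux_interp (m : ℕ) (A : ℕ → ℝ → ℝ≥0∞) (C₀ : ℝ) (hC₀ : 0 < C₀) (C : NNReal)
    (hfin : ∀ ε : ℝ, 0 < ε → ∀ k, k ≤ m + 1 → A k ε < ⊤)
    (h0 : ∀ ε : ℝ, 0 < ε → A 0 ε ≤ C)
    (hGN : ∀ j : ℕ, 1 ≤ j → j < m + 1 → ∀ τ : ℝ, 0 < τ → ∀ ε : ℝ, 0 < ε →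
      A j ε ≤ ENNReal.ofReal τ * (∑ k ∈ Finset.range (m + 2), A k ε) +
        ENNReal.ofReal (C₀ * τ ^ (-(j : ℝ) / ((m : ℝ) + 1 - (j : ℝ)))) * A 0 ε)
    (htop : Tendsto (fun ε : ℝ => ENNReal.ofReal (ε ^ (m + 1)) * A (m + 1) ε)
      (nhdsWithin 0 (Set.Ioi 0)) (nhds 0)) :
    ∀ j : ℕ, 1 ≤ j → j ≤ m + 1 →
      Tendsto (fun ε : ℝ => ENNReal.ofReal (ε ^ j) * A j ε)
        (nhdsWithin 0 (Set.Ioi 0)) (nhds 0) := by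
  -- key inequality
  have hkey : ∀ j : ℕ, 1 ≤ j → j < m + 1 → ∀ s : ℝ, 0 < s → ∀ ε : ℝ, 0 < ε →
      ENNReal.ofReal (ε ^ j) * A j ε ≤
        ENNReal.ofReal s * (ENNReal.ofReal (ε ^ (m + 1)) * ∑ k ∈ Finset.range (m + 2), A k ε) +
        ENNReal.ofReal (C₀ * s ^ (-(j : ℝ) / ((m : ℝ) + 1 - (j : ℝ)))) * C := by
    intro j hj1 hj2 s hs ε hε
    have hτ : 0 < s * ε ^ (m + 1 - j) := by positivity
    have h := hGN j hj1 hj2 _ hτ ε hε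
    have hmono := mul_le_mul_right h (ENNReal.ofReal (ε ^ j))
    refine hmono.trans ?_
    rw [mul_add, ← mul_assoc, ← mul_assoc,
      ← ENNReal.ofReal_mul (by positivity : (0:ℝ) ≤ ε ^ j),
      ← ENNReal.ofReal_mul (by positivity : (0:ℝ) ≤ ε ^ j)]
    have e1 : ε ^ j * (s * ε ^ (m + 1 - j)) = s * ε ^ (m + 1) := by
      rw [← mul_assoc, mul_comm (ε ^ j) s, mul_assoc, ← pow_add,
        Nat.add_sub_cancel' hj2.le]
    have e2 := aux_rpow m j hj2 s ε C₀ hs hε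
    rw [e1, e2, ENNReal.ofReal_mul hs.le, mul_assoc]
    exact add_le_add_right (mul_le_mul_right (h0 ε hε) _) _
  -- eventual facts
  have hev1 : ∀ᶠ ε : ℝ in nhdsWithin 0 (Set.Ioi 0), 0 < ε := eventually_mem_nhdsWithin
  have hev2 : ∀ᶠ ε : ℝ in nhdsWithin 0 (Set.Ioi 0), ε ≤ 1 := by
    have : ∀ᶠ ε : ℝ in nhds 0, ε ≤ 1 := by
      filter_upwards [Metric.ball_mem_nhds (0:ℝ) one_pos] with ε hε
      have := abs_lt.mp (by simpa [Real.dist_eq] using hε)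
      linarith [this.2]
    exact this.filter_mono nhdsWithin_le_nhds
  have hev3 : ∀ᶠ ε : ℝ in nhdsWithin 0 (Set.Ioi 0),
      ENNReal.ofReal (ε ^ (m + 1)) * A (m + 1) ε ≤ 1 :=
    ENNReal.tendsto_nhds_zero.mp htop 1 one_pos
  -- the constant θ and K, B
  set θ : ℝ := (2 * ((m : ℝ) + 1))⁻¹ with hθdef
  have hθ : 0 < θ := by positivity
  set K : ℝ≥0∞ := ∑ i ∈ Finset.range m,
    ENNReal.ofReal (C₀ * θ ^ (-((i + 1 : ℕ) : ℝ) / ((m : ℝ) + 1 - ((i + 1 : ℕ) : ℝ)))) * C with hKdef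
  have hKne : K ≠ ⊤ := by
    rw [hKdef]
    exact (ENNReal.sum_lt_top.mpr fun i _ =>
      ENNReal.mul_lt_top ENNReal.ofReal_lt_top ENNReal.coe_lt_top).ne
  set D : ℝ≥0∞ := (C : ℝ≥0∞) + K + 1 with hDdef
  have hDne : D ≠ ⊤ := by
    rw [hDdef]
    exact (ENNReal.add_lt_top.mpr ⟨ENNReal.add_lt_top.mpr
      ⟨ENNReal.coe_lt_top, hKne.lt_top⟩, ENNReal.one_lt_top⟩).ne
  set B : ℝ≥0∞ := 2 * D with hBdef
  have hBne : B ≠ ⊤ := by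
    rw [hBdef]
    exact ENNReal.mul_ne_top (by norm_num) hDne
  -- Step 1: boundedness of S
  have hSbound : ∀ᶠ ε : ℝ in nhdsWithin 0 (Set.Ioi 0),
      ∑ k ∈ Finset.range (m + 2), ENNReal.ofReal (ε ^ k) * A k ε ≤ B := by
    filter_upwards [hev1, hev2, hev3] with ε hε hε1 hεtop
    set S : ℝ≥0∞ := ∑ k ∈ Finset.range (m + 2), ENNReal.ofReal (ε ^ k) * A k ε with hSdef
    have hSfin : S ≠ ⊤ := by
      rw [hSdef]
      exact (ENNReal.sum_lt_top.mpr fun k hk =>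
        ENNReal.mul_lt_top ENNReal.ofReal_lt_top
          (hfin ε hε k (Nat.lt_succ_iff.mp (Finset.mem_range.mp hk)))).ne
    have hsplit : S = (∑ i ∈ Finset.range m, ENNReal.ofReal (ε ^ (i + 1)) * A (i + 1) ε)
        + ENNReal.ofReal (ε ^ 0) * A 0 ε + ENNReal.ofReal (ε ^ (m + 1)) * A (m + 1) ε := by
      rw [hSdef, Finset.sum_range_succ, Finset.sum_range_succ']
    have hZleS : ENNReal.ofReal (ε ^ (m + 1)) * ∑ k ∈ Finset.range (m + 2), A k ε ≤ S := by
      rw [hSdef, Finset.mul_sum]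
      refine Finset.sum_le_sum fun k hk => mul_le_mul_left (ENNReal.ofReal_le_ofReal ?_) _
      exact pow_le_pow_of_le_one hε.le hε1 (Nat.lt_succ_iff.mp (Finset.mem_range.mp hk))
    have hterm : ∀ i ∈ Finset.range m, ENNReal.ofReal (ε ^ (i + 1)) * A (i + 1) ε ≤
        ENNReal.ofReal θ * S +
          ENNReal.ofReal (C₀ * θ ^ (-((i + 1 : ℕ) : ℝ) / ((m : ℝ) + 1 - ((i + 1 : ℕ) : ℝ)))) * C := by
      intro i hi
      have hi' := Finset.mem_range.mp hi
      have := hkey (i + 1) (by omega) (by omega) θ hθ ε hε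
      exact this.trans (add_le_add_left (mul_le_mul_right hZleS _) _)
    have hsum1 : ∑ i ∈ Finset.range m, ENNReal.ofReal (ε ^ (i + 1)) * A (i + 1) ε ≤
        (m : ℝ≥0∞) * (ENNReal.ofReal θ * S) + K := by
      calc ∑ i ∈ Finset.range m, ENNReal.ofReal (ε ^ (i + 1)) * A (i + 1) ε
          ≤ ∑ i ∈ Finset.range m, (ENNReal.ofReal θ * S +
            ENNReal.ofReal (C₀ * θ ^ (-((i + 1 : ℕ) : ℝ) / ((m : ℝ) + 1 - ((i + 1 : ℕ) : ℝ)))) * C) :=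
            Finset.sum_le_sum hterm
        _ = (m : ℝ≥0∞) * (ENNReal.ofReal θ * S) + K := by
            rw [Finset.sum_add_distrib, Finset.sum_const, hKdef, Finset.card_range, nsmul_eq_mul]
    have hhalf : (m : ℝ≥0∞) * ENNReal.ofReal θ ≤ 2⁻¹ := by
      rw [show ((m : ℝ≥0∞)) = ENNReal.ofReal (m : ℝ) by simp,
        ← ENNReal.ofReal_mul (Nat.cast_nonneg m)]
      have h1 : (m : ℝ) * θ ≤ 2⁻¹ := by
        rw [hθdef, mul_inv_le_iff₀ (by positivity)]
        have : (0:ℝ) ≤ m := Nat.cast_nonneg m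
        nlinarith
      calc ENNReal.ofReal ((m : ℝ) * θ) ≤ ENNReal.ofReal 2⁻¹ := ENNReal.ofReal_le_ofReal h1
        _ = 2⁻¹ := by rw [ENNReal.ofReal_inv_of_pos two_pos, ENNReal.ofReal_ofNat]
    have hSD : S ≤ 2⁻¹ * S + D := by
      calc S = (∑ i ∈ Finset.range m, ENNReal.ofReal (ε ^ (i + 1)) * A (i + 1) ε)
          + ENNReal.ofReal (ε ^ 0) * A 0 ε + ENNReal.ofReal (ε ^ (m + 1)) * A (m + 1) ε := hsplit
        _ ≤ ((m : ℝ≥0∞) * (ENNReal.ofReal θ * S) + K) + (C : ℝ≥0∞) + 1 := by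
            refine add_le_add (add_le_add hsum1 ?_) hεtop
            simpa using h0 ε hε
        _ ≤ (2⁻¹ * S + K) + (C : ℝ≥0∞) + 1 := by
            refine add_le_add_left (add_le_add_left (add_le_add_left ?_ K) _) 1
            rw [← mul_assoc]
            exact mul_le_mul_left hhalf S
        _ = 2⁻¹ * S + D := by rw [hDdef]; ring
    have hS2ne : S / 2 ≠ ⊤ := by
      exact (ENNReal.div_lt_top hSfin (by norm_num)).ne
    have hS2 : S / 2 ≤ D := by
      have h1 : S / 2 + S / 2 ≤ D + S / 2 := by
        rw [ENNReal.add_halves]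
        calc S ≤ 2⁻¹ * S + D := hSD
          _ = D + S / 2 := by rw [ENNReal.div_eq_inv_mul, add_comm]
      exact (ENNReal.add_le_add_iff_right hS2ne).mp h1
    calc S = 2 * (S / 2) := (ENNReal.mul_div_cancel (by norm_num) (by norm_num)).symm
      _ ≤ 2 * D := mul_le_mul_right hS2 2
      _ = B := hBdef.symm
  -- Step 2: Z → 0
  have hZ : Tendsto (fun ε : ℝ => ENNReal.ofReal (ε ^ (m + 1)) * ∑ k ∈ Finset.range (m + 2), A k ε)
      (nhdsWithin 0 (Set.Ioi 0)) (nhds 0) := by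
    have hZle : ∀ᶠ ε : ℝ in nhdsWithin 0 (Set.Ioi 0),
        ENNReal.ofReal (ε ^ (m + 1)) * ∑ k ∈ Finset.range (m + 2), A k ε ≤
          ENNReal.ofReal ε * B + ENNReal.ofReal (ε ^ (m + 1)) * A (m + 1) ε := by
      filter_upwards [hev1, hev2, hSbound] with ε hε hε1 hSB
      rw [Finset.mul_sum, Finset.sum_range_succ]
      refine add_le_add ?_ le_rfl
      calc ∑ k ∈ Finset.range (m + 1), ENNReal.ofReal (ε ^ (m + 1)) * A k ε
          ≤ ∑ k ∈ Finset.range (m + 1), ENNReal.ofReal ε * (ENNReal.ofReal (ε ^ k) * A k ε) := by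
            refine Finset.sum_le_sum fun k hk => ?_
            rw [← mul_assoc, ← ENNReal.ofReal_mul hε.le, ← pow_succ']
            refine mul_le_mul_left (ENNReal.ofReal_le_ofReal ?_) _
            exact pow_le_pow_of_le_one hε.le hε1
              (Nat.succ_le_succ (Nat.lt_succ_iff.mp (Finset.mem_range.mp hk)))
        _ = ENNReal.ofReal ε * ∑ k ∈ Finset.range (m + 1), ENNReal.ofReal (ε ^ k) * A k ε := by
            rw [Finset.mul_sum]
        _ ≤ ENNReal.ofReal ε * ∑ k ∈ Finset.range (m + 2), ENNReal.ofReal (ε ^ k) * A k ε := by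
            refine mul_le_mul_right (Finset.sum_le_sum_of_subset ?_) _
            exact Finset.range_subset_range.mpr (by omega)
        _ ≤ ENNReal.ofReal ε * B := mul_le_mul_right hSB _
    have hg : Tendsto (fun ε : ℝ => ENNReal.ofReal ε * B + ENNReal.ofReal (ε ^ (m + 1)) * A (m + 1) ε)
        (nhdsWithin 0 (Set.Ioi 0)) (nhds 0) := by
      have h1 : Tendsto (fun ε : ℝ => ENNReal.ofReal ε) (nhdsWithin 0 (Set.Ioi 0)) (nhds 0) := by
        have := (ENNReal.continuous_ofReal.tendsto 0).mono_left (nhdsWithin_le_nhds :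
          nhdsWithin (0:ℝ) (Set.Ioi 0) ≤ nhds 0)
        simpa using this
      have h2 := ENNReal.Tendsto.mul_const (b := B) h1 (Or.inr hBne)
      rw [zero_mul] at h2
      simpa using h2.add htop
    exact tendsto_of_tendsto_of_tendsto_of_le_of_le' tendsto_const_nhds hg
      (Eventually.of_forall fun ε => zero_le) hZle
  -- Step 3
  intro j hj1 hj2
  rcases eq_or_lt_of_le hj2 with rfl | hjlt
  · exact htop
  · rw [ENNReal.tendsto_nhds_zero]
    intro δ hδ
    have hδ2 : 0 < δ / 2 := ENNReal.div_pos hδ.ne' (by norm_num)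
    have hjr : (j : ℝ) < (m : ℝ) + 1 := by exact_mod_cast hjlt
    have hj0 : (0:ℝ) < (j : ℝ) := by exact_mod_cast hj1
    have hγpos : 0 < (j : ℝ) / ((m : ℝ) + 1 - (j : ℝ)) := div_pos hj0 (by linarith)
    have hgt : Tendsto (fun s : ℝ =>
        ENNReal.ofReal (C₀ * s ^ (-(j : ℝ) / ((m : ℝ) + 1 - (j : ℝ)))) * C) atTop (nhds 0) := by
      have h1 : Tendsto (fun s : ℝ => s ^ (-(j : ℝ) / ((m : ℝ) + 1 - (j : ℝ)))) atTop (nhds 0) := by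
        simpa [neg_div] using tendsto_rpow_neg_atTop hγpos
      have h2 : Tendsto (fun s : ℝ => C₀ * s ^ (-(j : ℝ) / ((m : ℝ) + 1 - (j : ℝ)))) atTop (nhds 0) := by
        simpa using h1.const_mul C₀
      have h3 : Tendsto (fun s : ℝ =>
          ENNReal.ofReal (C₀ * s ^ (-(j : ℝ) / ((m : ℝ) + 1 - (j : ℝ))))) atTop (nhds 0) := by
        have := (ENNReal.continuous_ofReal.tendsto 0).comp h2
        simpa [Function.comp_def] using this
      have h4 := ENNReal.Tendsto.mul_const (b := (C : ℝ≥0∞)) h3 (Or.inr ENNReal.coe_ne_top)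
      rwa [zero_mul] at h4
    obtain ⟨s, hgs, hs0⟩ := ((hgt.eventually_lt_const hδ2).and (eventually_gt_atTop 0)).exists
    have hZs : ∀ᶠ ε : ℝ in nhdsWithin 0 (Set.Ioi 0),
        ENNReal.ofReal s * (ENNReal.ofReal (ε ^ (m + 1)) * ∑ k ∈ Finset.range (m + 2), A k ε) ≤
          δ / 2 := by
      have h5 := ENNReal.Tendsto.const_mul (a := ENNReal.ofReal s) hZ (Or.inr ENNReal.ofReal_ne_top)
      rw [mul_zero] at h5
      exact ENNReal.tendsto_nhds_zero.mp h5 (δ / 2) hδ2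
    filter_upwards [hev1, hZs] with ε hε hZε
    calc ENNReal.ofReal (ε ^ j) * A j ε
        ≤ ENNReal.ofReal s * (ENNReal.ofReal (ε ^ (m + 1)) * ∑ k ∈ Finset.range (m + 2), A k ε) +
          ENNReal.ofReal (C₀ * s ^ (-(j : ℝ) / ((m : ℝ) + 1 - (j : ℝ)))) * C :=
          hkey j hj1 hjlt s hs0 ε hε
      _ ≤ δ / 2 + δ / 2 := add_le_add hZε hgs.le
      _ = δ := ENNReal.add_halves δ

/-- Interpolation lemma: if `ε^{n₀} ∇^{n₀} φ_ε → 0` in `L^p(U)` and `φ_ε` is bounded in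
`L^p(U)`, then `ε^j ∇^j φ_ε → 0` in `L^p(U)` for every `1 ≤ j ≤ n₀`.  The bounded smooth
domain `U` enters through the Gagliardo–Nirenberg interpolation inequality `hGN`. -/
theorem stmt5 {N m : ℕ} (n₀ : ℕ) (hn₀ : 1 ≤ n₀) (p : ENNReal) (hp : 1 ≤ p) (hp' : p ≠ ⊤)
    (U : Set (EuclideanSpace ℝ (Fin N))) (hU : IsOpen U) (hUb : Bornology.IsBounded U)
    (hGN : ∃ C₀ : ℝ, 0 < C₀ ∧
      ∀ σ : EuclideanSpace ℝ (Fin N) → EuclideanSpace ℝ (Fin m),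
        ContDiff ℝ (n₀ : ℕ∞) σ → ∀ n : ℕ, 2 ≤ n → n ≤ n₀ → ∀ j : ℕ, 1 ≤ j → j < n →
        ∀ τ : ℝ, 0 < τ →
        eLpNorm (iteratedFDeriv ℝ j σ) p (volume.restrict U) ≤
          ENNReal.ofReal τ *
            (∑ k ∈ Finset.range (n + 1), eLpNorm (iteratedFDeriv ℝ k σ) p (volume.restrict U)) +
          ENNReal.ofReal (C₀ * τ ^ (-(j : ℝ) / ((n : ℝ) - (j : ℝ)))) *
            eLpNorm σ p (volume.restrict U))
    (φ : ℝ → EuclideanSpace ℝ (Fin N) → EuclideanSpace ℝ (Fin m))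
    (hφ : ∀ ε : ℝ, 0 < ε → ContDiff ℝ (n₀ : ℕ∞) (φ ε))
    (C : NNReal)
    (hbound : ∀ ε : ℝ, 0 < ε → eLpNorm (φ ε) p (volume.restrict U) ≤ C)
    (htop : Tendsto (fun ε : ℝ =>
        eLpNorm (fun x => ε ^ n₀ • iteratedFDeriv ℝ n₀ (φ ε) x) p (volume.restrict U))
      (nhdsWithin 0 (Set.Ioi 0)) (nhds 0)) :
    ∀ j : ℕ, 1 ≤ j → j ≤ n₀ →
      Tendsto (fun ε : ℝ =>
        eLpNorm (fun x => ε ^ j • iteratedFDeriv ℝ j (φ ε) x) p (volume.restrict U))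
      (nhdsWithin 0 (Set.Ioi 0)) (nhds 0) := by
  obtain ⟨C₀, hC₀, hGN⟩ := hGN
  obtain ⟨n, rfl⟩ : ∃ n, n₀ = n + 1 := ⟨n₀ - 1, (Nat.succ_pred_eq_of_pos hn₀).symm⟩
  set A : ℕ → ℝ → ℝ≥0∞ :=
    fun k ε => eLpNorm (iteratedFDeriv ℝ k (φ ε)) p (volume.restrict U) with hAdef
  have hA0eq : ∀ ε : ℝ, A 0 ε = eLpNorm (φ ε) p (volume.restrict U) := by
    intro ε
    simp only [hAdef]
    rw [← eLpNorm_norm (iteratedFDeriv ℝ 0 (φ ε)), ← eLpNorm_norm (φ ε)]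
    congr 1
    exact funext fun x => norm_iteratedFDeriv_zero
  have hsmul : ∀ (j : ℕ) (ε : ℝ), 0 < ε →
      eLpNorm (fun x => ε ^ j • iteratedFDeriv ℝ j (φ ε) x) p (volume.restrict U) =
        ENNReal.ofReal (ε ^ j) * A j ε := by
    intro j ε hε
    rw [show (fun x => ε ^ j • iteratedFDeriv ℝ j (φ ε) x) =
      (ε ^ j) • iteratedFDeriv ℝ j (φ ε) from rfl, eLpNorm_const_smul]
    congr 1
    rw [← ofReal_norm]
    simp [Real.norm_eq_abs, abs_pow, abs_of_pos hε]
  have hfin : ∀ ε : ℝ, 0 < ε → ∀ k, k ≤ n + 1 → A k ε < ⊤ := by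
    intro ε hε k hk
    have hcont : Continuous (iteratedFDeriv ℝ k (φ ε)) :=
      (hφ ε hε).continuous_iteratedFDeriv (by exact_mod_cast hk)
    obtain ⟨M, hM⟩ := (hUb.isCompact_closure).exists_bound_of_continuousOn hcont.continuousOn
    have hb : ∀ᵐ x ∂(volume.restrict U), ‖iteratedFDeriv ℝ k (φ ε) x‖ ≤ M :=
      (ae_restrict_iff' hU.measurableSet).mpr
        (Eventually.of_forall fun x hx => hM x (subset_closure hx))
    refine (eLpNorm_le_of_ae_bound hb).trans_lt ?_
    have hμ : volume.restrict U Set.univ < ⊤ := by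
      rw [Measure.restrict_apply_univ]; exact hUb.measure_lt_top
    exact ENNReal.mul_lt_top
      (ENNReal.rpow_lt_top_of_nonneg (by positivity) hμ.ne) ENNReal.ofReal_lt_top
  have h0 : ∀ ε : ℝ, 0 < ε → A 0 ε ≤ C := by
    intro ε hε
    rw [hA0eq ε]
    exact hbound ε hε
  have hGN' : ∀ j : ℕ, 1 ≤ j → j < n + 1 → ∀ τ : ℝ, 0 < τ → ∀ ε : ℝ, 0 < ε →
      A j ε ≤ ENNReal.ofReal τ * (∑ k ∈ Finset.range (n + 2), A k ε) +
        ENNReal.ofReal (C₀ * τ ^ (-(j : ℝ) / ((n : ℝ) + 1 - (j : ℝ)))) * A 0 ε := by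
    intro j hj1 hj2 τ hτ ε hε
    have h := hGN (φ ε) (hφ ε hε) (n + 1) (by omega) le_rfl j hj1 hj2 τ hτ
    rw [hA0eq ε]
    push_cast at h ⊢
    exact h
  have htop' : Tendsto (fun ε : ℝ => ENNReal.ofReal (ε ^ (n + 1)) * A (n + 1) ε)
      (nhdsWithin 0 (Set.Ioi 0)) (nhds 0) := by
    refine htop.congr' ?_
    filter_upwards [eventually_mem_nhdsWithin] with ε (hε : ε ∈ Set.Ioi 0)
    exact hsmul (n + 1) ε hε
  have main := aux_interp n A C₀ hC₀ C hfin h0 hGN' htop'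
  intro j hj1 hj2
  refine (main j hj1 hj2).congr' ?_
  filter_upwards [eventually_mem_nhdsWithin] with ε (hε : ε ∈ Set.Ioi 0)
  exact (hsmul j ε hε).symm
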